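/- Let μ be a nontrivial symmetric weakly stable probability measure on ℝ and p ∈ (0,2]. Suppose λ and ν are probability measures on ℝ, both ≠ δ_0 and both concentrated on [0,∞), each satisfying (T_a(μ∘ρ)) ∗ (T_b(μ∘ρ)) = T_{(a^p+b^p)^{1/p}}(μ∘ρ) for all a, b > 0 (with ρ = λ and ρ = ν respectively). Then there exist positive constants a, b such that μ∘λ = T_a γ and μ∘ν = T_b γ, where γ has characteristic function exp(−|t|^p), and T_{1/a} λ = T_{1/b} ν; in particular ν = T_c λ for some c > 0. -/

import Mathlib

open MeasureTheory Filter Topology ENNReal BoundedContinuousFunction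

noncomputable section

/-- `T_c μ`: pushforward of `μ` under `x ↦ c * x`. -/
def rescale (c : ℝ) (μ : Measure ℝ) : Measure ℝ := μ.map (fun x => c * x)

/-- Scale mixture `μ ∘ ν`: pushforward of `μ × ν` under `(x, s) ↦ x * s`. -/
def mix (μ ν : Measure ℝ) : Measure ℝ := (μ.prod ν).map (fun p => p.1 * p.2)

/-- Convolution of two measures on `ℝ`. -/
def mconv (μ ν : Measure ℝ) : Measure ℝ := (μ.prod ν).map (fun p => p.1 + p.2)

/-- `n`-fold convolution power, with the convention that the 0th power is `δ_0`. -/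
def convPow (μ : Measure ℝ) : ℕ → Measure ℝ
  | 0 => Measure.dirac 0
  | n + 1 => mconv (convPow μ n) μ

/-- A probability measure `μ` on `ℝ` is weakly stable if for all `a b : ℝ` there is a
probability measure `lam` with `(T_a μ) ∗ (T_b μ) = μ ∘ lam`. -/
def WeaklyStable (μ : Measure ℝ) : Prop :=
  ∀ a b : ℝ, ∃ lam : Measure ℝ, IsProbabilityMeasure lam ∧
    mconv (rescale a μ) (rescale b μ) = mix μ lam

/-- `μ` is nontrivial: it has no atoms. -/
def NontrivialMeasure (μ : Measure ℝ) : Prop := ∀ x : ℝ, μ {x} = 0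

/-- `μ` is symmetric: `T_{-1} μ = μ`. -/
def SymmetricMeasure (μ : Measure ℝ) : Prop := rescale (-1) μ = μ

/-- `lam` is `μ`-weakly infinitely divisible: for every `n ≥ 1` there is a probability
measure `ν` concentrated on `[0, ∞)` with `(μ ∘ ν)^{∗ n} = μ ∘ lam`. -/
def MuWeaklyInfDiv (μ lam : Measure ℝ) : Prop :=
  ∀ n : ℕ, 1 ≤ n → ∃ ν : Measure ℝ, IsProbabilityMeasure ν ∧ ν (Set.Iio 0) = 0 ∧
    convPow (mix μ ν) n = mix μ lam

/-- Characteristic function of a measure on `ℝ`. -/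
def charFun' (μ : Measure ℝ) (t : ℝ) : ℂ := ∫ x, Complex.exp (t * x * Complex.I) ∂μ

/-- Weak convergence of a sequence of measures on `ℝ`. -/
def WeakTendsto (μs : ℕ → Measure ℝ) (μ : Measure ℝ) : Prop :=
  ∀ f : ℝ →ᵇ ℝ, Tendsto (fun n => ∫ x, f x ∂(μs n)) atTop (𝓝 (∫ x, f x ∂μ))

/-- A convolution semigroup family for `(μ, lam)`. -/
def ConvSemigroupFamily (μ lam : Measure ℝ) (L : ℝ → Measure ℝ) : Prop :=
  (∀ r : ℝ, 0 ≤ r → IsProbabilityMeasure (L r)) ∧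
  L 0 = Measure.dirac 0 ∧ L 1 = lam ∧
  (∀ r s : ℝ, 0 ≤ r → 0 ≤ s → mconv (mix μ (L r)) (mix μ (L s)) = mix μ (L (r + s))) ∧
  (∀ f : ℝ →ᵇ ℝ, Tendsto (fun r => ∫ x, f x ∂(L r)) (𝓝[>] (0 : ℝ)) (𝓝 (f 0)))

/-- `C_#`: bounded continuous functions vanishing on a neighborhood of `0`. -/
def CSharp (f : ℝ →ᵇ ℝ) : Prop := ∃ ε > (0 : ℝ), ∀ x : ℝ, |x| < ε → f x = 0

/-- `κ(μ) = sup {p ∈ [0,2] : ∫ |x|^p μ(dx) < ∞}` (with `sup ∅ = 0` in `ℝ`). -/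
def kappa (μ : Measure ℝ) : ℝ :=
  sSup {p : ℝ | p ∈ Set.Icc (0 : ℝ) 2 ∧ ∫⁻ x, ENNReal.ofReal (|x| ^ p) ∂μ < ∞}

namespace Aux

lemma meas_mul2 : Measurable (fun q : ℝ × ℝ => q.1 * q.2) :=
  measurable_fst.mul measurable_snd

lemma meas_add2 : Measurable (fun q : ℝ × ℝ => q.1 + q.2) :=
  measurable_fst.add measurable_snd

lemma meas_cmul (c : ℝ) : Measurable (fun x : ℝ => c * x) :=
  measurable_id.const_mul c

lemma rescale_one (m : Measure ℝ) : rescale 1 m = m := by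
  simp [rescale, Measure.map_id]

lemma rescale_rescale (a b : ℝ) (m : Measure ℝ) :
    rescale a (rescale b m) = rescale (a * b) m := by
  rw [rescale, rescale, Measure.map_map (meas_cmul a) (meas_cmul b)]
  congr 1
  funext x
  simp [Function.comp]
  ring

instance rescale_prob (c : ℝ) (m : Measure ℝ) [IsProbabilityMeasure m] :
    IsProbabilityMeasure (rescale c m) :=
  Measure.isProbabilityMeasure_map (meas_cmul c).aemeasurable

instance mix_prob (m ρ : Measure ℝ) [IsProbabilityMeasure m] [IsProbabilityMeasure ρ] :
    IsProbabilityMeasure (mix m ρ) :=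
  Measure.isProbabilityMeasure_map meas_mul2.aemeasurable

instance mconv_prob (m ρ : Measure ℝ) [IsProbabilityMeasure m] [IsProbabilityMeasure ρ] :
    IsProbabilityMeasure (mconv m ρ) :=
  Measure.isProbabilityMeasure_map meas_add2.aemeasurable

lemma mix_comm (m ρ : Measure ℝ) [SFinite m] [SFinite ρ] : mix m ρ = mix ρ m := by
  rw [mix, mix, ← Measure.prod_swap, Measure.map_map meas_mul2 measurable_swap]
  congr 1
  funext q
  simp [Function.comp, mul_comm]

lemma mix_assoc (m ρ τ : Measure ℝ) [SFinite m] [SFinite ρ] [SFinite τ] :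
    mix (mix m ρ) τ = mix m (mix ρ τ) := by
  have h1 : (mix m ρ).prod τ = ((m.prod ρ).prod τ).map (Prod.map (fun q : ℝ × ℝ => q.1 * q.2) id) := by
    rw [mix, ← Measure.map_prod_map _ _ meas_mul2 measurable_id, Measure.map_id]
  have h2 : m.prod (mix ρ τ) = (m.prod (ρ.prod τ)).map (Prod.map id (fun q : ℝ × ℝ => q.1 * q.2)) := by
    rw [mix, ← Measure.map_prod_map _ _ measurable_id meas_mul2, Measure.map_id]
  rw [mix, h1, Measure.map_map meas_mul2 (meas_mul2.prodMap measurable_id),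
    mix, h2, Measure.map_map meas_mul2 (measurable_id.prodMap meas_mul2),
    ← Measure.prodAssoc_prod, Measure.map_map _ MeasurableEquiv.prodAssoc.measurable]
  · congr 1
    funext q
    simp [Function.comp, MeasurableEquiv.prodAssoc, mul_assoc]
  · exact meas_mul2.comp (measurable_fst.prodMk (meas_mul2.comp measurable_snd))

lemma rescale_mix (c : ℝ) (m ρ : Measure ℝ) [SFinite m] [SFinite ρ] :
    rescale c (mix m ρ) = mix m (rescale c ρ) := by
  have h : m.prod (rescale c ρ) = (m.prod ρ).map (Prod.map id (fun x : ℝ => c * x)) := by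
    rw [rescale, ← Measure.map_prod_map _ _ measurable_id (meas_cmul c), Measure.map_id]
  rw [rescale, mix, Measure.map_map (meas_cmul c) meas_mul2, mix, h,
    Measure.map_map meas_mul2 (measurable_id.prodMap (meas_cmul c))]
  congr 1
  funext q
  simp [Function.comp]
  ring

lemma rescale_mix_left (c : ℝ) (m ρ : Measure ℝ) [SFinite m] [SFinite ρ] :
    rescale c (mix m ρ) = mix (rescale c m) ρ := by
  have h : (rescale c m).prod ρ = (m.prod ρ).map (Prod.map (fun x : ℝ => c * x) id) := by
    rw [rescale, ← Measure.map_prod_map _ _ (meas_cmul c) measurable_id, Measure.map_id]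
  rw [rescale, mix, Measure.map_map (meas_cmul c) meas_mul2, mix, h,
    Measure.map_map meas_mul2 ((meas_cmul c).prodMap measurable_id)]
  congr 1
  funext q
  simp [Function.comp]
  ring

lemma cexp_cont (t : ℝ) : Continuous (fun x : ℝ => Complex.exp (t * x * Complex.I)) := by
  continuity

lemma norm_cexp (r : ℝ) : ‖Complex.exp ((r : ℂ) * Complex.I)‖ = 1 := by
  exact Complex.norm_exp_ofReal_mul_I r

lemma norm_cexp' (t x : ℝ) : ‖Complex.exp ((t : ℂ) * (x : ℂ) * Complex.I)‖ = 1 := by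
  have h : (t : ℂ) * (x : ℂ) * Complex.I = ((t * x : ℝ) : ℂ) * Complex.I := by push_cast; ring
  rw [h]; exact norm_cexp _

lemma charFun'_rescale (c : ℝ) (m : Measure ℝ) (t : ℝ) :
    charFun' (rescale c m) t = charFun' m (c * t) := by
  rw [charFun', rescale,
    integral_map (meas_cmul c).aemeasurable (cexp_cont t).aestronglyMeasurable, charFun']
  congr 1
  funext x
  congr 1
  push_cast
  ring

lemma charFun'_mconv (m₁ m₂ : Measure ℝ) [IsProbabilityMeasure m₁] [IsProbabilityMeasure m₂]
    (t : ℝ) : charFun' (mconv m₁ m₂) t = charFun' m₁ t * charFun' m₂ t := by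
  rw [charFun', mconv,
    integral_map meas_add2.aemeasurable (cexp_cont t).aestronglyMeasurable]
  have h : ∀ q : ℝ × ℝ, Complex.exp ((t : ℂ) * (↑(q.1 + q.2) : ℂ) * Complex.I)
      = Complex.exp ((t : ℂ) * (q.1 : ℂ) * Complex.I) * Complex.exp ((t : ℂ) * (q.2 : ℂ) * Complex.I) := by
    intro q
    rw [← Complex.exp_add]
    congr 1
    push_cast
    ring
  simp_rw [h]
  rw [MeasureTheory.integral_prod_mul (μ := m₁) (ν := m₂)
    (f := fun x : ℝ => Complex.exp ((t : ℂ) * (x : ℂ) * Complex.I))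
    (g := fun x : ℝ => Complex.exp ((t : ℂ) * (x : ℂ) * Complex.I))]
  rfl

lemma charFun'_mix (m ρ : Measure ℝ) [IsProbabilityMeasure m] [IsProbabilityMeasure ρ]
    (t : ℝ) : charFun' (mix m ρ) t = ∫ s, charFun' m (t * s) ∂ρ := by
  rw [charFun', mix,
    integral_map meas_mul2.aemeasurable (cexp_cont t).aestronglyMeasurable]
  have hint : Integrable (fun q : ℝ × ℝ => Complex.exp ((t : ℂ) * (↑(q.1 * q.2) : ℂ) * Complex.I))
      (m.prod ρ) := by
    constructor
    · apply Continuous.aestronglyMeasurable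
      continuity
    · apply MeasureTheory.HasFiniteIntegral.of_bounded (C := (1 : ℝ))
      filter_upwards with q
      have h2 : (t : ℂ) * (↑(q.1 * q.2) : ℂ) * Complex.I
          = ((t * (q.1 * q.2) : ℝ) : ℂ) * Complex.I := by push_cast; ring
      rw [h2, norm_cexp]
  rw [integral_prod_symm _ hint]
  congr 1
  funext s
  rw [charFun']
  congr 1
  funext x
  congr 1
  push_cast
  ring

lemma charFun'_zero (m : Measure ℝ) [IsProbabilityMeasure m] : charFun' m 0 = 1 := by
  simp [charFun']

lemma charFun'_continuous (m : Measure ℝ) [IsProbabilityMeasure m] :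
    Continuous (charFun' m) := by
  apply MeasureTheory.continuous_of_dominated (bound := fun _ : ℝ => (1 : ℝ))
  · exact fun t => (cexp_cont t).aestronglyMeasurable
  · intro t
    filter_upwards with x
    rw [norm_cexp']
  · exact integrable_const _
  · filter_upwards with x
    continuity

lemma charFun'_norm_le (m : Measure ℝ) [IsProbabilityMeasure m] (t : ℝ) :
    ‖charFun' m t‖ ≤ 1 := by
  calc ‖charFun' m t‖ ≤ ∫ x, ‖Complex.exp ((t : ℂ) * (x : ℂ) * Complex.I)‖ ∂m :=
        norm_integral_le_integral_norm _
    _ = 1 := by simp_rw [norm_cexp']; simp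

lemma charFun'_neg (m : Measure ℝ) (t : ℝ) :
    charFun' (rescale (-1) m) t = charFun' m (-t) := by
  rw [charFun'_rescale]; norm_num

lemma charFun'_conj (m : Measure ℝ) (t : ℝ) :
    (starRingEnd ℂ) (charFun' m t) = charFun' m (-t) := by
  rw [charFun', ← integral_conj, charFun']
  congr 1
  funext x
  rw [← Complex.exp_conj]
  congr 1
  simp [Complex.ext_iff]

lemma eq_dirac_of_singleton (m : Measure ℝ) [IsProbabilityMeasure m] (h : m {0} = 1) :
    m = Measure.dirac 0 := by
  ext s hs
  rw [Measure.dirac_apply' _ hs]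
  have hcompl : m ({0}ᶜ) = 0 := by
    have := measure_compl (measurableSet_singleton (0:ℝ)) (measure_ne_top m _)
    rw [h] at this
    simpa using this
  by_cases h0 : (0:ℝ) ∈ s
  · have h1 : m {0} ≤ m s := measure_mono (Set.singleton_subset_iff.mpr h0)
    have h2 : m s ≤ 1 := prob_le_one
    rw [Set.indicator_of_mem h0]
    rw [h] at h1
    exact le_antisymm h2 h1
  · have hsub : s ⊆ {0}ᶜ := fun x hx => by
      simp only [Set.mem_compl_iff, Set.mem_singleton_iff]
      rintro rfl; exact h0 hx
    rw [Set.indicator_of_notMem h0]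
    exact le_antisymm (le_trans (measure_mono hsub) hcompl.le) zero_le

lemma integrable_cexp (m : Measure ℝ) [IsProbabilityMeasure m] (t : ℝ) :
    Integrable (fun x : ℝ => Complex.exp ((t : ℂ) * (x : ℂ) * Complex.I)) m := by
  constructor
  · exact (cexp_cont t).aestronglyMeasurable
  · apply MeasureTheory.HasFiniteIntegral.of_bounded (C := (1 : ℝ))
    filter_upwards with x
    rw [norm_cexp']

lemma cos_ae_of_charFun_one (m : Measure ℝ) [IsProbabilityMeasure m] (t : ℝ)
    (h : charFun' m t = 1) : ∀ᵐ x ∂m, ∃ n : ℤ, (n : ℝ) * (2 * Real.pi) = t * x := by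
  have hre : ∫ x, Real.cos (t * x) ∂m = 1 := by
    have h1 : (charFun' m t).re = 1 := by rw [h]; rfl
    rw [charFun'] at h1
    have h3 := integral_re (μ := m) (integrable_cexp m t)
    rw [RCLike.re_to_complex, h1] at h3
    rw [← h3]
    congr 1
    funext x
    have h2 : (t : ℂ) * (x : ℂ) * Complex.I = ((t * x : ℝ) : ℂ) * Complex.I := by
      push_cast; ring
    rw [h2, RCLike.re_to_complex]
    exact (Complex.exp_ofReal_mul_I_re _).symm
  have hcos_int : Integrable (fun x : ℝ => Real.cos (t * x)) m := by
    constructor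
    · exact (Real.continuous_cos.comp (continuous_const.mul continuous_id)).aestronglyMeasurable
    · apply MeasureTheory.HasFiniteIntegral.of_bounded (C := (1 : ℝ))
      filter_upwards with x
      exact (Real.abs_cos_le_one _)
  have hint : Integrable (fun x : ℝ => 1 - Real.cos (t * x)) m :=
    (integrable_const _).sub hcos_int
  have hzero : ∫ x, (1 - Real.cos (t * x)) ∂m = 0 := by
    rw [integral_sub (integrable_const _) hcos_int, hre]
    simp
  have hnonneg : 0 ≤ᵐ[m] fun x => 1 - Real.cos (t * x) := by
    filter_upwards with x
    simp [Real.cos_le_one]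
  have hae : (fun x => 1 - Real.cos (t * x)) =ᵐ[m] 0 :=
    (integral_eq_zero_iff_of_nonneg_ae hnonneg hint).mp hzero
  filter_upwards [hae] with x hx
  have hc : Real.cos (t * x) = 1 := by
    have : (1 : ℝ) - Real.cos (t * x) = 0 := hx
    linarith
  exact (Real.cos_eq_one_iff _).mp hc

lemma singleton_one_of_charFun_one (m : Measure ℝ) [IsProbabilityMeasure m]
    (h : ∀ t : ℝ, charFun' m t = 1) : m {0} = 1 := by
  have h1 := cos_ae_of_charFun_one m 1 (h 1)
  have h2 := cos_ae_of_charFun_one m (Real.sqrt 2) (h (Real.sqrt 2))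
  have hae : ∀ᵐ x ∂m, x ∈ ({0} : Set ℝ) := by
    filter_upwards [h1, h2] with x ⟨n, hn⟩ ⟨k, hk⟩
    simp only [Set.mem_singleton_iff]
    by_contra hx
    rw [one_mul] at hn
    -- x = n * 2π, n ≠ 0, √2 * x = k * 2π  ⇒ √2 = k / n rational
    have hn0 : (n : ℝ) ≠ 0 := by
      intro h0
      apply hx
      rw [← hn, h0, zero_mul]
    have hpi : (2 * Real.pi) ≠ 0 := by positivity
    have hsq : Real.sqrt 2 = (k : ℝ) / (n : ℝ) := by
      have : (k : ℝ) * (2 * Real.pi) = Real.sqrt 2 * ((n : ℝ) * (2 * Real.pi)) := by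
        rw [hn, hk]
      field_simp at this ⊢
      nlinarith [Real.pi_pos, this]
    have : Irrational (Real.sqrt 2) := irrational_sqrt_two
    apply this.ne_rat ((k : ℚ) / (n : ℚ))
    rw [hsq]
    push_cast
    ring
  have hco : m ({0}ᶜ) = 0 := by
    have h' := hae
    rw [MeasureTheory.ae_iff] at h'
    convert h' using 2
    rfl
  have hsum := measure_add_measure_compl (μ := m) (measurableSet_singleton (0:ℝ))
  rw [hco, add_zero, measure_univ] at hsum
  exact hsum

lemma re_charFun_le_one (m : Measure ℝ) [IsProbabilityMeasure m] (t : ℝ) :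
    (charFun' m t).re ≤ 1 := by
  have h1 : (charFun' m t).re ≤ ‖charFun' m t‖ := Complex.re_le_norm _
  exact h1.trans (charFun'_norm_le m t)

lemma charFun_mix_eq_exp (μ : Measure ℝ) [IsProbabilityMeasure μ]
    (hnt : ∀ x : ℝ, μ {x} = 0) (hsymm : rescale (-1) μ = μ)
    (p : ℝ) (hp0 : 0 < p)
    (lam : Measure ℝ) [IsProbabilityMeasure lam] (hlamne : lam ≠ Measure.dirac 0)
    (hstab : ∀ a b : ℝ, 0 < a → 0 < b →
      mconv (rescale a (mix μ lam)) (rescale b (mix μ lam))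
        = rescale ((a ^ p + b ^ p) ^ (1 / p)) (mix μ lam)) :
    ∃ K : ℝ, 0 < K ∧ ∀ t : ℝ, charFun' (mix μ lam) t = ((Real.exp (-(K * |t| ^ p))) : ℂ) := by
  set m : Measure ℝ := mix μ lam with hm
  set φ : ℝ → ℂ := charFun' m with hφ
  have hφc : Continuous φ := charFun'_continuous m
  have hφ0 : φ 0 = 1 := charFun'_zero m
  have hsym_m : rescale (-1) m = m := by
    rw [hm, rescale_mix_left, hsymm]
  have hφeven : ∀ t, φ (-t) = φ t := by
    intro t
    rw [hφ, ← charFun'_neg, hsym_m]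
  have hφreal : ∀ t, φ t = (((φ t).re : ℝ) : ℂ) := by
    intro t
    have hc := charFun'_conj m t
    rw [← hφ] at hc
    rw [hφeven] at hc
    exact (Complex.conj_eq_iff_re.mp hc).symm
  set r : ℝ → ℝ := fun t => (φ t).re with hr
  have hr_cont : Continuous r := Complex.continuous_re.comp hφc
  have hr0 : r 0 = 1 := by rw [hr]; simp [hφ0]
  have hrle : ∀ t, r t ≤ 1 := fun t => re_charFun_le_one m t
  -- functional equation
  have hFE : ∀ a b : ℝ, 0 < a → 0 < b → r a * r b = r ((a ^ p + b ^ p) ^ (1 / p)) := by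
    intro a b ha hb
    have h := congrArg (fun mm => charFun' mm 1) (hstab a b ha hb)
    rw [charFun'_mconv, charFun'_rescale, charFun'_rescale, charFun'_rescale] at h
    rw [mul_one, mul_one, mul_one] at h
    rw [← hφ] at h
    rw [hφreal a, hφreal b, hφreal ((a ^ p + b ^ p) ^ (1 / p))] at h
    rw [← Complex.ofReal_mul] at h
    exact_mod_cast h
  -- h on (0,∞)
  set g : ℝ → ℝ := fun u => r (u ^ (1 / p)) with hg
  have hp0' : (1 : ℝ) / p ≠ 0 := by positivity
  have hrpow_p : ∀ u : ℝ, 0 < u → (u ^ (1 / p)) ^ p = u := by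
    intro u hu
    rw [← Real.rpow_mul hu.le]
    rw [one_div, inv_mul_cancel₀ (ne_of_gt hp0), Real.rpow_one]
  have hgmul : ∀ u v : ℝ, 0 < u → 0 < v → g u * g v = g (u + v) := by
    intro u v hu hv
    have ha : (0:ℝ) < u ^ (1 / p) := Real.rpow_pos_of_pos hu _
    have hb : (0:ℝ) < v ^ (1 / p) := Real.rpow_pos_of_pos hv _
    have := hFE _ _ ha hb
    rw [hrpow_p u hu, hrpow_p v hv] at this
    exact this
  have hgsq : ∀ u : ℝ, 0 < u → g u = g (u / 2) ^ 2 := by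
    intro u hu
    have h2 := hgmul (u / 2) (u / 2) (by linarith) (by linarith)
    have h3 : u / 2 + u / 2 = u := by ring
    rw [h3] at h2
    rw [← h2]
    ring
  have hgnonneg : ∀ u : ℝ, 0 < u → 0 ≤ g u := by
    intro u hu
    rw [hgsq u hu]
    positivity
  have hgpos : ∀ u : ℝ, 0 < u → 0 < g u := by
    intro u hu
    rcases (hgnonneg u hu).lt_or_eq with h | h
    · exact h
    · exfalso
      -- g u = 0 propagates down to 0, contradicting continuity at 0
      have hzero : ∀ n : ℕ, g (u / 2 ^ n) = 0 := by
        intro n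
        induction n with
        | zero => simpa using h.symm
        | succ k ih =>
          have hk : (0:ℝ) < u / 2 ^ k := by positivity
          have := hgsq _ hk
          rw [ih] at this
          have h2 : g (u / 2 ^ k / 2) = 0 := by
            nlinarith [sq_nonneg (g (u / 2 ^ k / 2))]
          have h3 : u / 2 ^ k / 2 = u / 2 ^ (k + 1) := by ring
          rw [← h3]
          exact h2
      have htend : Tendsto (fun n : ℕ => (u / 2 ^ n) ^ (1 / p)) atTop (𝓝 0) := by
        have h1 : Tendsto (fun n : ℕ => u / 2 ^ n) atTop (𝓝 0) := by
          have h2 : Tendsto (fun n : ℕ => ((1:ℝ) / 2) ^ n) atTop (𝓝 0) :=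
            tendsto_pow_atTop_nhds_zero_of_lt_one (by norm_num) (by norm_num)
          have h3 := h2.const_mul u
          rw [mul_zero] at h3
          convert h3 using 2 with n
          rw [div_pow, one_pow]
          ring
        have h4 : ContinuousAt (fun x : ℝ => x ^ (1 / p)) 0 :=
          Real.continuousAt_rpow_const 0 (1 / p) (Or.inr (by positivity))
        have h5 := h4.tendsto.comp h1
        rwa [Real.zero_rpow hp0'] at h5
      have hlim : Tendsto (fun n : ℕ => r ((u / 2 ^ n) ^ (1 / p))) atTop (𝓝 (r 0)) :=
        (hr_cont.continuousAt.tendsto).comp htend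
      have : Tendsto (fun _ : ℕ => (0:ℝ)) atTop (𝓝 (r 0)) := by
        convert hlim using 2 with n
        exact (hzero n).symm
      have h6 := tendsto_nhds_unique this tendsto_const_nhds
      rw [hr0] at h6
      norm_num at h6
  -- logarithm
  set L : ℝ → ℝ := fun u => Real.log (g u) with hL
  have hLadd : ∀ u v : ℝ, 0 < u → 0 < v → L (u + v) = L u + L v := by
    intro u v hu hv
    rw [hL]
    simp only
    rw [← hgmul u v hu hv, Real.log_mul (ne_of_gt (hgpos u hu)) (ne_of_gt (hgpos v hv))]
  have hLnat : ∀ (k : ℕ) (u : ℝ), 0 < u → L ((k + 1) * u) = (k + 1) * L u := by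
    intro k
    induction k with
    | zero => intro u hu; simp
    | succ j ih =>
      intro u hu
      have h1 : ((j + 1 + 1 : ℕ) : ℝ) * u = ((j + 1 : ℕ) : ℝ) * u + u := by push_cast; ring
      push_cast
      push_cast at h1 ih
      rw [h1, hLadd _ _ (by positivity) hu, ih u hu]
      ring
  -- L is linear on positives
  have hLlin : ∀ u : ℝ, 0 < u → L u = u * L 1 := by
    have hfrac : ∀ (k n : ℕ), L ((k + 1 : ℝ) / (n + 1 : ℝ)) = ((k + 1 : ℝ) / (n + 1 : ℝ)) * L 1 := by
      intro k n
      have hn : (0:ℝ) < 1 / (n + 1 : ℝ) := by positivity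
      have h1 : L ((k + 1 : ℝ) * (1 / (n + 1 : ℝ))) = (k + 1 : ℝ) * L (1 / (n + 1 : ℝ)) := by
        have := hLnat k (1 / (n + 1 : ℝ)) hn
        push_cast at this
        exact this
      have h2 : L ((n + 1 : ℝ) * (1 / (n + 1 : ℝ))) = (n + 1 : ℝ) * L (1 / (n + 1 : ℝ)) := by
        have := hLnat n (1 / (n + 1 : ℝ)) hn
        push_cast at this
        exact this
      have h3 : ((n:ℝ) + 1) * (1 / (n + 1 : ℝ)) = 1 := by
        field_simp
      rw [h3] at h2
      have h4 : L (1 / (n + 1 : ℝ)) = L 1 / (n + 1 : ℝ) := by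
        field_simp at h2 ⊢
        linarith [h2]
      have h5 : ((k:ℝ) + 1) / ((n:ℝ) + 1) = ((k:ℝ) + 1) * (1 / ((n:ℝ) + 1)) := by ring
      rw [h5, h1, h4]
      ring
    intro u hu
    -- approximate u by (⌈u(n+1)⌉)/(n+1)
    set v : ℕ → ℝ := fun n => ((⌈u * (n + 1)⌉₊ : ℝ)) / (n + 1) with hv
    have hvform : ∀ n : ℕ, L (v n) = v n * L 1 := by
      intro n
      have hpos : 0 < u * ((n:ℝ) + 1) := by positivity
      have hk1 : 1 ≤ ⌈u * (n + 1)⌉₊ := by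
        rw [Nat.one_le_iff_ne_zero, ← Nat.pos_iff_ne_zero, Nat.ceil_pos]
        push_cast
        exact hpos
      obtain ⟨j, hj⟩ : ∃ j : ℕ, ⌈u * (n + 1)⌉₊ = j + 1 := ⟨⌈u * (n + 1)⌉₊ - 1, by omega⟩
      have := hfrac j n
      rw [hv]
      simp only
      rw [hj]
      push_cast
      push_cast at this
      exact this
    have hvtend : Tendsto v atTop (𝓝 u) := by
      have hge : ∀ n : ℕ, u ≤ v n := by
        intro n
        rw [hv]
        simp only
        rw [le_div_iff₀ (by positivity)]
        have := Nat.le_ceil (u * ((n:ℝ) + 1))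
        push_cast at this ⊢
        linarith
      have hlt : ∀ n : ℕ, v n ≤ u + 1 / ((n:ℝ) + 1) := by
        intro n
        rw [hv]
        simp only
        rw [div_le_iff₀ (by positivity)]
        have h0 : 0 ≤ u * ((n:ℝ) + 1) := by positivity
        have := Nat.ceil_lt_add_one h0
        push_cast at this ⊢
        have hn1 : (0:ℝ) < (n:ℝ) + 1 := by positivity
        calc (⌈u * ((n:ℝ) + 1)⌉₊ : ℝ) ≤ u * ((n:ℝ) + 1) + 1 := by linarith
          _ = (u + 1 / ((n:ℝ)+1)) * ((n:ℝ)+1) := by field_simp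
      have h1 : Tendsto (fun n : ℕ => u + 1 / ((n:ℝ) + 1)) atTop (𝓝 u) := by
        have := (tendsto_one_div_add_atTop_nhds_zero_nat : Tendsto (fun n : ℕ => 1 / ((n:ℝ) + 1)) atTop (𝓝 0))
        have h2 := this.const_add u
        rwa [add_zero] at h2
      exact tendsto_of_tendsto_of_tendsto_of_le_of_le tendsto_const_nhds h1 hge hlt
    -- L continuous at u
    have hvpos : ∀ n, 0 < v n := fun n => lt_of_lt_of_le hu (by
      have := hvtend; exact (by
        rw [hv]; simp only
        rw [le_div_iff₀ (by positivity)]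
        have := Nat.le_ceil (u * ((n:ℝ) + 1))
        push_cast at this ⊢
        linarith))
    have hLcont : ContinuousAt L u := by
      have h1 : ContinuousAt (fun x : ℝ => x ^ (1 / p)) u :=
        Real.continuousAt_rpow_const u (1 / p) (Or.inl (ne_of_gt hu))
      have h3 : ContinuousAt (fun x : ℝ => r (x ^ (1 / p))) u :=
        (hr_cont.tendsto _).comp h1
      have h4 : ContinuousAt (fun x : ℝ => Real.log (r (x ^ (1 / p)))) u :=
        Tendsto.comp (Real.continuousAt_log (ne_of_gt (hgpos u hu))) h3
      exact h4
    have hLv : Tendsto (fun n => L (v n)) atTop (𝓝 (L u)) := (hLcont.tendsto).comp hvtend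
    have hLv2 : Tendsto (fun n => v n * L 1) atTop (𝓝 (u * L 1)) := hvtend.mul_const _
    have : Tendsto (fun n => L (v n)) atTop (𝓝 (u * L 1)) := by
      convert hLv2 using 2 with n
      exact hvform n
    exact tendsto_nhds_unique hLv this
  -- L 1 < 0
  have hL1le : L 1 ≤ 0 := Real.log_nonpos (hgnonneg 1 one_pos) (by
    have := hrle ((1:ℝ) ^ (1 / p)); exact this)
  have hL1ne : L 1 ≠ 0 := by
    intro hzero
    have hgone : ∀ u : ℝ, 0 < u → g u = 1 := by
      intro u hu
      have h1 : L u = 0 := by rw [hLlin u hu, hzero, mul_zero]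
      have h2 := Real.exp_log (hgpos u hu)
      rw [hL] at h1
      simp only at h1
      rw [h1] at h2
      simpa using h2.symm
    have hback : ∀ t : ℝ, 0 < t → (t ^ p) ^ (1 / p) = t := by
      intro t ht
      rw [← Real.rpow_mul ht.le, mul_one_div, div_self (ne_of_gt hp0), Real.rpow_one]
    have hrone : ∀ t : ℝ, 0 < t → r t = 1 := by
      intro t ht
      have h1 : g (t ^ p) = 1 := hgone _ (Real.rpow_pos_of_pos ht p)
      rw [hg] at h1
      simp only at h1
      rw [hback t ht] at h1
      exact h1
    have hφone : ∀ t : ℝ, φ t = 1 := by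
      have hposs : ∀ t : ℝ, 0 < t → φ t = 1 := by
        intro t ht
        rw [hφreal t]
        show ((r t : ℝ) : ℂ) = 1
        rw [hrone t ht]
        norm_num
      intro t
      rcases lt_trichotomy t 0 with h | h | h
      · rw [← hφeven t]
        exact hposs (-t) (by linarith)
      · rw [h, hφ0]
      · exact hposs t h
    have hm0 : m {0} = 1 :=
      singleton_one_of_charFun_one m (fun t => hφone t)
    have hmap : m {0} = (μ.prod lam) ((fun q : ℝ × ℝ => q.1 * q.2) ⁻¹' {0}) := by
      rw [hm, mix, Measure.map_apply meas_mul2 (measurableSet_singleton 0)]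
    have hsub : ((fun q : ℝ × ℝ => q.1 * q.2) ⁻¹' {0})
        ⊆ (({0} : Set ℝ) ×ˢ (Set.univ : Set ℝ)) ∪ ((Set.univ : Set ℝ) ×ˢ ({0} : Set ℝ)) := by
      rintro ⟨x, y⟩ hq
      simp only [Set.mem_preimage, Set.mem_singleton_iff] at hq
      rcases mul_eq_zero.mp hq with h | h
      · left; simp [h]
      · right; simp [h]
    have hle' : m {0} ≤ μ {0} * lam Set.univ + μ Set.univ * lam {0} := by
      rw [hmap]
      refine le_trans (measure_mono hsub) ?_
      refine le_trans (measure_union_le _ _) ?_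
      rw [Measure.prod_prod, Measure.prod_prod]
    rw [hnt 0, zero_mul, zero_add, measure_univ, one_mul, hm0] at hle'
    have hlam1 : lam {0} = 1 := le_antisymm prob_le_one hle'
    exact hlamne (eq_dirac_of_singleton lam hlam1)
  have hL1neg : L 1 < 0 := lt_of_le_of_ne hL1le hL1ne
  refine ⟨-(L 1), by linarith, ?_⟩
  have hback : ∀ t : ℝ, 0 < t → (t ^ p) ^ (1 / p) = t := by
    intro t ht
    rw [← Real.rpow_mul ht.le, mul_one_div, div_self (ne_of_gt hp0), Real.rpow_one]
  have key : ∀ t : ℝ, 0 < t → r t = Real.exp (-(-(L 1) * t ^ p)) := by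
    intro t ht
    have htp : (0:ℝ) < t ^ p := Real.rpow_pos_of_pos ht p
    have h1 : r t = g (t ^ p) := by
      rw [hg]
      simp only
      rw [hback t ht]
    have h2 : Real.exp (L (t ^ p)) = g (t ^ p) := Real.exp_log (hgpos _ htp)
    have h3 : L (t ^ p) = t ^ p * L 1 := hLlin _ htp
    rw [h1, ← h2, h3]
    ring_nf
  intro t
  rcases lt_trichotomy t 0 with h | h | h
  · rw [← hφeven t, hφreal (-t)]
    show ((r (-t) : ℝ) : ℂ) = _
    rw [key (-t) (by linarith), abs_of_neg h]
  · rw [h, hφ0, abs_zero, Real.zero_rpow (ne_of_gt hp0)]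
    norm_num
  · rw [hφreal t]
    show ((r t : ℝ) : ℂ) = _
    rw [key t h, abs_of_pos h]

lemma ae_nonneg_of_Iio (m : Measure ℝ) (h : m (Set.Iio 0) = 0) : ∀ᵐ s ∂m, 0 ≤ s := by
  rw [MeasureTheory.ae_iff]
  convert h using 2
  ext x
  simp [not_le]

lemma integrable_of_ae_bounded (m : Measure ℝ) [IsProbabilityMeasure m]
    (f : ℝ → ℝ) (hf : Continuous f) (C : ℝ) (hC : ∀ᵐ x ∂m, ‖f x‖ ≤ C) :
    Integrable f m :=
  ⟨hf.aestronglyMeasurable, MeasureTheory.HasFiniteIntegral.of_bounded hC⟩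

lemma bdd_integral_eq (P Q : Measure ℝ) [IsProbabilityMeasure P] [IsProbabilityMeasure Q]
    (hPs : ∀ᵐ x ∂P, x ∈ Set.Icc (0:ℝ) 1) (hQs : ∀ᵐ x ∂Q, x ∈ Set.Icc (0:ℝ) 1)
    (h : ∀ n : ℕ, ∫ x, x ^ n ∂P = ∫ x, x ^ n ∂Q)
    (f : ℝ → ℝ) (hf : Continuous f) (C : ℝ) (hfC : ∀ x, ‖f x‖ ≤ C) :
    ∫ x, f x ∂P = ∫ x, f x ∂Q := by
  have hmono : ∀ (g : ℝ → ℝ), Continuous g → ∀ D : ℝ, (∀ x ∈ Set.Icc (0:ℝ) 1, ‖g x‖ ≤ D) →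
      Integrable g P ∧ Integrable g Q := by
    intro g hg D hD
    constructor
    · exact integrable_of_ae_bounded P g hg D (by filter_upwards [hPs] with x hx using hD x hx)
    · exact integrable_of_ae_bounded Q g hg D (by filter_upwards [hQs] with x hx using hD x hx)
  have hpoly : ∀ g : Polynomial ℝ, ∫ x, g.eval x ∂P = ∫ x, g.eval x ∂Q := by
    intro g
    have hint : ∀ (m : Measure ℝ) (i : ℕ), Integrable (fun x : ℝ => g.coeff i * x ^ i) m →
        True := fun _ _ _ => trivial
    have hI : ∀ i : ℕ, Integrable (fun x : ℝ => g.coeff i * x ^ i) P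
        ∧ Integrable (fun x : ℝ => g.coeff i * x ^ i) Q := by
      intro i
      apply hmono _ (by continuity) |g.coeff i|
      intro x hx
      rw [norm_mul]
      simp only [Set.mem_Icc] at hx
      have h1 : ‖x ^ i‖ ≤ 1 := by
        rw [norm_pow]
        apply pow_le_one₀ (by rw [Real.norm_eq_abs, abs_of_nonneg hx.1]; exact hx.1)
        rw [Real.norm_eq_abs, abs_of_nonneg hx.1]
        exact hx.2
      calc ‖g.coeff i‖ * ‖x ^ i‖ ≤ ‖g.coeff i‖ * 1 := by
            exact mul_le_mul_of_nonneg_left h1 (norm_nonneg _)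
        _ = |g.coeff i| := by rw [mul_one, Real.norm_eq_abs]
    have hev : ∀ x : ℝ, g.eval x = ∑ i ∈ Finset.range (g.natDegree + 1), g.coeff i * x ^ i := by
      intro x
      rw [Polynomial.eval_eq_sum_range]
    simp_rw [hev]
    rw [integral_finset_sum _ (fun i _ => (hI i).1), integral_finset_sum _ (fun i _ => (hI i).2)]
    refine Finset.sum_congr rfl fun i _ => ?_
    rw [integral_const_mul, integral_const_mul, h i]
  -- now approximate f
  apply eq_of_forall_dist_le
  intro ε hε
  obtain ⟨g, hg⟩ := exists_polynomial_near_of_continuousOn 0 1 f hf.continuousOn (ε / 2)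
    (by linarith)
  have hfint : Integrable f P ∧ Integrable f Q := hmono f hf C (fun x _ => hfC x)
  have hgC : ∀ x ∈ Set.Icc (0:ℝ) 1, ‖g.eval x‖ ≤ C + ε / 2 := by
    intro x hx
    have h1 := hg x hx
    have h2 := hfC x
    rw [Real.norm_eq_abs] at h2 ⊢
    have := abs_sub_abs_le_abs_sub (g.eval x) (f x)
    linarith [this, le_of_lt h1]
  have hgint := hmono (fun x => g.eval x) g.continuous (C + ε / 2) hgC
  have hd1 : |(∫ x, f x ∂P) - ∫ x, g.eval x ∂P| ≤ ε / 2 := by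
    rw [← integral_sub hfint.1 hgint.1]
    have hb : ∀ᵐ x ∂P, ‖f x - g.eval x‖ ≤ ε / 2 := by
      filter_upwards [hPs] with x hx
      rw [Real.norm_eq_abs, abs_sub_comm]
      exact le_of_lt (hg x hx)
    have := norm_integral_le_of_norm_le_const (μ := P) hb
    simpa [Real.norm_eq_abs, measure_univ] using this
  have hd2 : |(∫ x, f x ∂Q) - ∫ x, g.eval x ∂Q| ≤ ε / 2 := by
    rw [← integral_sub hfint.2 hgint.2]
    have hb : ∀ᵐ x ∂Q, ‖f x - g.eval x‖ ≤ ε / 2 := by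
      filter_upwards [hQs] with x hx
      rw [Real.norm_eq_abs, abs_sub_comm]
      exact le_of_lt (hg x hx)
    have := norm_integral_le_of_norm_le_const (μ := Q) hb
    simpa [Real.norm_eq_abs, measure_univ] using this
  rw [Real.dist_eq]
  have h3 := hpoly g
  have h4 := abs_sub_le (∫ x, f x ∂P) (∫ x, g.eval x ∂P) (∫ x, f x ∂Q)
  have h5 := abs_sub_le (∫ x, g.eval x ∂P) (∫ x, g.eval x ∂Q) (∫ x, f x ∂Q)
  rw [h3] at h4
  have h6 : |(∫ x, g.eval x ∂Q) - ∫ x, g.eval x ∂Q| = 0 := by simp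
  rw [abs_sub_comm (∫ x, g.eval x ∂Q) (∫ x, f x ∂Q)] at h5
  calc |(∫ x, f x ∂P) - ∫ x, f x ∂Q|
      ≤ |(∫ x, f x ∂P) - ∫ x, g.eval x ∂Q| + |(∫ x, g.eval x ∂Q) - ∫ x, f x ∂Q| := by
        rw [← h3] at h4 ⊢
        exact abs_sub_le _ _ _
    _ ≤ ε / 2 + ε / 2 := by
        refine add_le_add ?_ ?_
        · rw [← h3]; exact hd1
        · rw [abs_sub_comm]; exact hd2
    _ = ε := by ring

lemma measure_eq_of_moments (P Q : Measure ℝ) [IsProbabilityMeasure P] [IsProbabilityMeasure Q]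
    (hPs : ∀ᵐ x ∂P, x ∈ Set.Icc (0:ℝ) 1) (hQs : ∀ᵐ x ∂Q, x ∈ Set.Icc (0:ℝ) 1)
    (h : ∀ n : ℕ, ∫ x, x ^ n ∂P = ∫ x, x ^ n ∂Q) : P = Q := by
  apply MeasureTheory.ext_of_forall_lintegral_eq_of_IsFiniteMeasure
  intro f
  have hcont : Continuous (fun x : ℝ => ((f x) : ℝ)) :=
    NNReal.continuous_coe.comp f.continuous
  obtain ⟨D, hD⟩ := f.bounded
  have hbd : ∀ x : ℝ, ‖((f x) : ℝ)‖ ≤ (f 0 : ℝ) + D := by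
    intro x
    rw [Real.norm_eq_abs, abs_of_nonneg (f x).coe_nonneg]
    have h1 := hD x 0
    rw [NNReal.dist_eq] at h1
    have h2 := le_abs_self ((f x : ℝ) - (f 0 : ℝ))
    linarith
  have hintP : Integrable (fun x : ℝ => ((f x) : ℝ)) P :=
    integrable_of_ae_bounded P _ hcont _ (Eventually.of_forall hbd)
  have hintQ : Integrable (fun x : ℝ => ((f x) : ℝ)) Q :=
    integrable_of_ae_bounded Q _ hcont _ (Eventually.of_forall hbd)
  rw [MeasureTheory.lintegral_coe_eq_integral _ hintP,
    MeasureTheory.lintegral_coe_eq_integral _ hintQ]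
  congr 1
  exact bdd_integral_eq P Q hPs hQs h _ hcont _ hbd

lemma laplace_uniq (P Q : Measure ℝ) [IsProbabilityMeasure P] [IsProbabilityMeasure Q]
    (hP0 : ∀ᵐ y ∂P, 0 ≤ y) (hQ0 : ∀ᵐ y ∂Q, 0 ≤ y)
    (h : ∀ u : ℝ, 0 < u → (∫ y, Real.exp (-(u * y)) ∂P) = ∫ y, Real.exp (-(u * y)) ∂Q) :
    P = Q := by
  have hexp : Continuous (fun y : ℝ => Real.exp (-y)) := by continuity
  set RP := P.map (fun y => Real.exp (-y)) with hRP
  set RQ := Q.map (fun y => Real.exp (-y)) with hRQ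
  haveI : IsProbabilityMeasure RP := Measure.isProbabilityMeasure_map hexp.aemeasurable
  haveI : IsProbabilityMeasure RQ := Measure.isProbabilityMeasure_map hexp.aemeasurable
  have hmom : ∀ (m : Measure ℝ) (n : ℕ), (∫ x, x ^ n ∂(m.map (fun y => Real.exp (-y))))
      = ∫ y, Real.exp (-((n : ℝ) * y)) ∂m := by
    intro m n
    rw [integral_map hexp.aemeasurable]
    · congr 1
      funext y
      rw [← Real.exp_nat_mul]
      congr 1
      ring
    · exact (continuous_pow n).aestronglyMeasurable
  have hsupport : ∀ (m : Measure ℝ), (∀ᵐ y ∂m, 0 ≤ y) →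
      ∀ᵐ x ∂(m.map (fun y => Real.exp (-y))), x ∈ Set.Icc (0:ℝ) 1 := by
    intro m hm
    apply (MeasureTheory.ae_map_iff hexp.aemeasurable measurableSet_Icc).mpr
    filter_upwards [hm] with y hy
    constructor
    · exact (Real.exp_pos _).le
    · rw [Real.exp_le_one_iff]
      linarith
  have hPQ : RP = RQ := by
    apply measure_eq_of_moments RP RQ (hsupport P hP0) (hsupport Q hQ0)
    intro n
    rw [hRP, hRQ, hmom, hmom]
    rcases Nat.eq_zero_or_pos n with h0 | hpos
    · subst h0
      simp
    · exact h n (by exact_mod_cast hpos)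
  have hrec : ∀ m : Measure ℝ, (m.map (fun y => Real.exp (-y))).map (fun x => -Real.log x) = m := by
    intro m
    rw [Measure.map_map (g := fun x => -Real.log x) Real.measurable_log.neg hexp.measurable]
    have : ((fun x => -Real.log x) ∘ fun y => Real.exp (-y)) = id := by
      funext y
      simp [Function.comp, Real.log_exp]
    rw [this, Measure.map_id]
  calc P = (P.map (fun y => Real.exp (-y))).map (fun x => -Real.log x) := (hrec P).symm
    _ = (Q.map (fun y => Real.exp (-y))).map (fun x => -Real.log x) := by rw [← hRP, ← hRQ, hPQ]
    _ = Q := hrec Q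

lemma rpow_const_cont (p : ℝ) (hp0 : 0 < p) : Continuous (fun y : ℝ => y ^ p) :=
  continuous_iff_continuousAt.mpr (fun y => Real.continuousAt_rpow_const y p (Or.inr hp0.le))

lemma preimage_cmul_Iio (c : ℝ) (hc : 0 < c) :
    (fun s : ℝ => c * s) ⁻¹' (Set.Iio 0) = Set.Iio 0 := by
  ext s
  simp only [Set.mem_preimage, Set.mem_Iio]
  constructor
  · intro h
    by_contra h'
    push_neg at h'
    exact absurd h (not_lt.mpr (mul_nonneg hc.le h'))
  · intro h
    exact mul_neg_of_pos_of_neg hc h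

lemma gamma_char (m : Measure ℝ) [IsProbabilityMeasure m] (p K : ℝ) (hp0 : 0 < p) (hK : 0 < K)
    (hm : ∀ t : ℝ, charFun' m t = ((Real.exp (-(K * |t| ^ p))) : ℂ)) :
    ∀ t : ℝ, charFun' (rescale (1 / K ^ (1 / p)) m) t = ((Real.exp (-(|t| ^ p))) : ℂ) := by
  intro t
  set a : ℝ := K ^ (1 / p) with ha_def
  have ha : 0 < a := Real.rpow_pos_of_pos hK _
  have hap : a ^ p = K := by
    rw [ha_def, ← Real.rpow_mul hK.le, one_div, inv_mul_cancel₀ (ne_of_gt hp0), Real.rpow_one]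
  rw [charFun'_rescale, hm]
  congr 2
  have h1 : |1 / a * t| = (1 / a) * |t| := by
    rw [abs_mul, abs_of_pos (by positivity)]
  rw [h1, Real.mul_rpow (by positivity) (abs_nonneg t), one_div, Real.inv_rpow ha.le, hap]
  field_simp

lemma cancel_mix (p : ℝ) (hp0 : 0 < p) (μ lam'' ν'' : Measure ℝ)
    [IsProbabilityMeasure μ] [IsProbabilityMeasure lam''] [IsProbabilityMeasure ν'']
    (hlne : ∀ᵐ s ∂lam'', 0 ≤ s) (hnne : ∀ᵐ s ∂ν'', 0 ≤ s)
    (hc1 : ∀ t : ℝ, charFun' (mix μ lam'') t = ((Real.exp (-(|t| ^ p))) : ℂ))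
    (hc2 : ∀ t : ℝ, charFun' (mix μ ν'') t = ((Real.exp (-(|t| ^ p))) : ℂ)) :
    lam'' = ν'' := by
  have hM : mix (mix μ lam'') ν'' = mix (mix μ ν'') lam'' := by
    rw [mix_assoc, mix_assoc, mix_comm lam'' ν'']
  have hch : ∀ t : ℝ, (∫ s, ((Real.exp (-(|t * s| ^ p)) : ℝ) : ℂ) ∂ν'')
      = ∫ s, ((Real.exp (-(|t * s| ^ p)) : ℝ) : ℂ) ∂lam'' := by
    intro t
    have h1 := charFun'_mix (mix μ lam'') ν'' t
    have h2 := charFun'_mix (mix μ ν'') lam'' t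
    rw [hM] at h1
    rw [h1] at h2
    simp_rw [hc1] at h2
    simp_rw [hc2] at h2
    exact h2
  have hreal : ∀ t : ℝ, (∫ s, Real.exp (-(|t * s| ^ p)) ∂ν'')
      = ∫ s, Real.exp (-(|t * s| ^ p)) ∂lam'' := by
    intro t
    have h1 := hch t
    have hcontf : Continuous (fun s : ℝ => Real.exp (-(|t * s| ^ p))) := by
      apply Real.continuous_exp.comp
      apply Continuous.neg
      exact (rpow_const_cont p hp0).comp (continuous_abs.comp (continuous_const.mul continuous_id))
    have hbd : ∀ s : ℝ, ‖Real.exp (-(|t * s| ^ p))‖ ≤ 1 := by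
      intro s
      rw [Real.norm_eq_abs, abs_of_pos (Real.exp_pos _), Real.exp_le_one_iff]
      simp [Real.rpow_nonneg (abs_nonneg _)]
      positivity
    have hi1 : Integrable (fun s : ℝ => Real.exp (-(|t * s| ^ p))) ν'' :=
      integrable_of_ae_bounded ν'' _ hcontf 1 (Eventually.of_forall hbd)
    have hi2 : Integrable (fun s : ℝ => Real.exp (-(|t * s| ^ p))) lam'' :=
      integrable_of_ae_bounded lam'' _ hcontf 1 (Eventually.of_forall hbd)
    have e1 : (∫ s, ((Real.exp (-(|t * s| ^ p)) : ℝ) : ℂ) ∂ν'')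
        = (((∫ s, Real.exp (-(|t * s| ^ p)) ∂ν'') : ℝ) : ℂ) := by
      exact ContinuousLinearMap.integral_comp_comm Complex.ofRealCLM hi1
    have e2 : (∫ s, ((Real.exp (-(|t * s| ^ p)) : ℝ) : ℂ) ∂lam'')
        = (((∫ s, Real.exp (-(|t * s| ^ p)) ∂lam'') : ℝ) : ℂ) := by
      exact ContinuousLinearMap.integral_comp_comm Complex.ofRealCLM hi2
    rw [e1, e2] at h1
    exact_mod_cast h1
  have habs_cont : Continuous (fun s : ℝ => |s| ^ p) :=
    (rpow_const_cont p hp0).comp continuous_abs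
  set P : Measure ℝ := lam''.map (fun s => |s| ^ p) with hP
  set Q : Measure ℝ := ν''.map (fun s => |s| ^ p) with hQ
  haveI : IsProbabilityMeasure P := Measure.isProbabilityMeasure_map habs_cont.aemeasurable
  haveI : IsProbabilityMeasure Q := Measure.isProbabilityMeasure_map habs_cont.aemeasurable
  have hnonnegP : ∀ (m : Measure ℝ), ∀ᵐ y ∂(m.map (fun s : ℝ => |s| ^ p)), 0 ≤ y := by
    intro m
    apply (MeasureTheory.ae_map_iff habs_cont.aemeasurable measurableSet_Ici).mpr
    filter_upwards with s
    exact Real.rpow_nonneg (abs_nonneg s) p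
  have hlap : ∀ u : ℝ, 0 < u → (∫ y, Real.exp (-(u * y)) ∂Q) = ∫ y, Real.exp (-(u * y)) ∂P := by
    intro u hu
    set t : ℝ := u ^ (1 / p) with ht_def
    have ht : 0 < t := Real.rpow_pos_of_pos hu _
    have htp : t ^ p = u := by
      rw [ht_def, ← Real.rpow_mul hu.le, one_div, inv_mul_cancel₀ (ne_of_gt hp0), Real.rpow_one]
    have hintg : ∀ s : ℝ, Real.exp (-(u * (|s| ^ p))) = Real.exp (-(|t * s| ^ p)) := by
      intro s
      congr 1
      rw [abs_mul, Real.mul_rpow (abs_nonneg t) (abs_nonneg s), abs_of_pos ht, htp]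
    have hexpc : Continuous (fun y : ℝ => Real.exp (-(u * y))) := by continuity
    rw [hP, hQ, integral_map habs_cont.aemeasurable hexpc.aestronglyMeasurable,
      integral_map habs_cont.aemeasurable hexpc.aestronglyMeasurable]
    simp_rw [hintg]
    exact hreal t
  have hPQ : Q = P := laplace_uniq Q P (hnonnegP ν'') (hnonnegP lam'') hlap
  have hinv_cont : Continuous (fun y : ℝ => y ^ (1 / p)) :=
    rpow_const_cont (1 / p) (by positivity)
  have hrec : ∀ (m : Measure ℝ), (∀ᵐ s ∂m, 0 ≤ s) →
      (m.map (fun s : ℝ => |s| ^ p)).map (fun y : ℝ => y ^ (1 / p)) = m := by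
    intro m hm
    rw [Measure.map_map hinv_cont.measurable habs_cont.measurable]
    have h1 : ((fun y : ℝ => y ^ (1 / p)) ∘ fun s : ℝ => |s| ^ p) =ᵐ[m] id := by
      filter_upwards [hm] with s hs
      simp only [Function.comp, id]
      rw [abs_of_nonneg hs, ← Real.rpow_mul hs, mul_one_div, div_self (ne_of_gt hp0),
        Real.rpow_one]
    rw [Measure.map_congr h1, Measure.map_id]
  calc lam'' = P.map (fun y : ℝ => y ^ (1 / p)) := (hrec lam'' hlne).symm
    _ = Q.map (fun y : ℝ => y ^ (1 / p)) := by rw [hPQ]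
    _ = ν'' := hrec ν'' hnne

end Aux

theorem stmt6 (μ : Measure ℝ) (hμ : IsProbabilityMeasure μ) (hnt : NontrivialMeasure μ)
    (hsym : SymmetricMeasure μ) (hws : WeaklyStable μ)
    (p : ℝ) (hp : p ∈ Set.Ioc (0 : ℝ) 2)
    (lam ν : Measure ℝ)
    (hlam : IsProbabilityMeasure lam) (hν : IsProbabilityMeasure ν)
    (hlamne : lam ≠ Measure.dirac 0) (hνne : ν ≠ Measure.dirac 0)
    (hlam0 : lam (Set.Iio 0) = 0) (hν0 : ν (Set.Iio 0) = 0)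
    (hstab1 : ∀ a b : ℝ, 0 < a → 0 < b →
      mconv (rescale a (mix μ lam)) (rescale b (mix μ lam))
        = rescale ((a ^ p + b ^ p) ^ (1 / p)) (mix μ lam))
    (hstab2 : ∀ a b : ℝ, 0 < a → 0 < b →
      mconv (rescale a (mix μ ν)) (rescale b (mix μ ν))
        = rescale ((a ^ p + b ^ p) ^ (1 / p)) (mix μ ν)) :
    ∃ γ : Measure ℝ, IsProbabilityMeasure γ ∧
      (∀ t : ℝ, charFun' γ t = (Real.exp (-(|t| ^ p)) : ℂ)) ∧
      ∃ a : ℝ, 0 < a ∧ ∃ b : ℝ, 0 < b ∧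
        mix μ lam = rescale a γ ∧ mix μ ν = rescale b γ ∧
        rescale (1 / a) lam = rescale (1 / b) ν ∧
        ∃ c : ℝ, 0 < c ∧ ν = rescale c lam := by
  haveI := hμ
  haveI := hlam
  haveI := hν
  have hp0 : 0 < p := hp.1
  obtain ⟨K, hK, hKf⟩ := Aux.charFun_mix_eq_exp μ hnt hsym p hp0 lam hlamne hstab1
  obtain ⟨K', hK', hK'f⟩ := Aux.charFun_mix_eq_exp μ hnt hsym p hp0 ν hνne hstab2
  have ha : 0 < K ^ (1 / p) := Real.rpow_pos_of_pos hK _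
  have hb : 0 < K' ^ (1 / p) := Real.rpow_pos_of_pos hK' _
  have hγchar : ∀ t : ℝ, charFun' (rescale (1 / K ^ (1 / p)) (mix μ lam)) t
      = ((Real.exp (-(|t| ^ p))) : ℂ) := Aux.gamma_char (mix μ lam) p K hp0 hK hKf
  have hγ'char : ∀ t : ℝ, charFun' (rescale (1 / K' ^ (1 / p)) (mix μ ν)) t
      = ((Real.exp (-(|t| ^ p))) : ℂ) := Aux.gamma_char (mix μ ν) p K' hp0 hK' hK'f
  have hγmix : rescale (1 / K ^ (1 / p)) (mix μ lam)
      = mix μ (rescale (1 / K ^ (1 / p)) lam) := Aux.rescale_mix _ _ _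
  have hγ'mix : rescale (1 / K' ^ (1 / p)) (mix μ ν)
      = mix μ (rescale (1 / K' ^ (1 / p)) ν) := Aux.rescale_mix _ _ _
  have hnn : ∀ (c : ℝ), 0 < c → ∀ (m : Measure ℝ), m (Set.Iio 0) = 0 →
      ∀ᵐ s ∂(rescale c m), 0 ≤ s := by
    intro c hc m hm
    apply Aux.ae_nonneg_of_Iio
    rw [rescale, Measure.map_apply (Aux.meas_cmul c) measurableSet_Iio,
      Aux.preimage_cmul_Iio c hc]
    exact hm
  have hcan : rescale (1 / K ^ (1 / p)) lam = rescale (1 / K' ^ (1 / p)) ν := by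
    apply Aux.cancel_mix p hp0 μ _ _ (hnn _ (by positivity) lam hlam0)
      (hnn _ (by positivity) ν hν0)
    · intro t
      rw [← hγmix]
      exact hγchar t
    · intro t
      rw [← hγ'mix]
      exact hγ'char t
  have hres1 : mix μ lam = rescale (K ^ (1 / p)) (rescale (1 / K ^ (1 / p)) (mix μ lam)) := by
    rw [Aux.rescale_rescale, mul_one_div, div_self (ne_of_gt ha), Aux.rescale_one]
  have hγγ' : rescale (1 / K ^ (1 / p)) (mix μ lam) = rescale (1 / K' ^ (1 / p)) (mix μ ν) := by
    rw [hγmix, hγ'mix, hcan]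
  have hres2 : mix μ ν = rescale (K' ^ (1 / p)) (rescale (1 / K ^ (1 / p)) (mix μ lam)) := by
    rw [hγγ', Aux.rescale_rescale, mul_one_div, div_self (ne_of_gt hb), Aux.rescale_one]
  refine ⟨rescale (1 / K ^ (1 / p)) (mix μ lam), ?_, hγchar,
    K ^ (1 / p), ha, K' ^ (1 / p), hb, hres1, hres2, hcan,
    K' ^ (1 / p) * (1 / K ^ (1 / p)), by positivity, ?_⟩
  · haveI : IsProbabilityMeasure (mix μ lam) := Aux.mix_prob μ lam
    exact Aux.rescale_prob _ _
  · have h1 : rescale (K' ^ (1 / p)) (rescale (1 / K ^ (1 / p)) lam)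
        = rescale (K' ^ (1 / p) * (1 / K ^ (1 / p))) lam := Aux.rescale_rescale _ _ _
    have h2 : rescale (K' ^ (1 / p)) (rescale (1 / K' ^ (1 / p)) ν) = ν := by
      rw [Aux.rescale_rescale, mul_one_div, div_self (ne_of_gt hb), Aux.rescale_one]
    rw [← h2, ← hcan, h1]
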